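/- Let A, B be real n×n matrices with B invertible and B⁻¹A = −2EQE + P. For z ∈ ℍⁿ and y = y(z), the matrix of second holomorphic partial derivatives (holomorphic Hessian) of S at y equals 2iQ − i·diag(ε₁/(1+e^{−y₁}), …, εₙ/(1+e^{−yₙ})), and its determinant satisfies det Hess S(y) = iⁿ · det(B)⁻¹ · det(A·diag(z₁'',…,zₙ'') + B·diag(z₁,…,zₙ)⁻¹) · ∏_{k=1}^n z_k/(1−z_k). -/

import Mathlib

open Matrix Real

/-- The dilogarithm `Li₂(z) = -∫₀¹ Log(1 - z t) / t dt`. -/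
noncomputable def Li2 (z : ℂ) : ℂ :=
  -∫ t in (0:ℝ)..(1:ℝ), Complex.log (1 - z * (t : ℂ)) / (t : ℂ)

/-- The sign `ε_k`: `1` for the first `nP` indices, `-1` for the rest. -/
def epsR (nP n : ℕ) (k : Fin n) : ℝ := if (k : ℕ) < nP then 1 else -1

/-- The potential function
`S(y) = i yᵀQy + Σ (-ε_k) y_k w_k + i Σ_{k ≤ n₊} Li₂(-e^{y_k}) - i Σ_{k > n₊} Li₂(-e^{y_k})`. -/
noncomputable def potential (nP nN : ℕ) (Q : Matrix (Fin (nP + nN)) (Fin (nP + nN)) ℝ)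
    (w : Fin (nP + nN) → ℂ) (y : Fin (nP + nN) → ℂ) : ℂ :=
  Complex.I * (y ⬝ᵥ (Q.map Complex.ofReal).mulVec y)
    + ∑ k, -(epsR nP (nP + nN) k : ℂ) * y k * w k
    + Complex.I * ∑ k ∈ Finset.univ.filter (fun k : Fin (nP + nN) => (k : ℕ) < nP),
        Li2 (-Complex.exp (y k))
    - Complex.I * ∑ k ∈ Finset.univ.filter (fun k : Fin (nP + nN) => ¬ (k : ℕ) < nP),
        Li2 (-Complex.exp (y k))

lemma slit_of_im {u : ℂ} (h : u.im ≠ 0) : u ∈ Complex.slitPlane :=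
  Complex.mem_slitPlane_iff.mpr (Or.inr h)

lemma im_one_sub_mul (x : ℂ) (t : ℝ) : (1 - x * (t:ℂ)).im = -(x.im * t) := by
  simp [Complex.sub_im, Complex.mul_im]

/-- FTC: the integral of `-(1 - z t)⁻¹` over `[0,1]`. -/
lemma integral_aux {z : ℂ} (hz : z.im ≠ 0) :
    (∫ t in (0:ℝ)..(1:ℝ), -(1 - z * (t:ℂ))⁻¹) = Complex.log (1 - z) / z := by
  have hz0 : z ≠ 0 := fun h => hz (by simp [h])
  have hne : ∀ t : ℝ, t ∈ Set.uIcc (0:ℝ) 1 → (1 - z * t) ∈ Complex.slitPlane := by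
    intro t ht
    rcases eq_or_ne t 0 with rfl | h0
    · simp [Complex.mem_slitPlane_iff]
    · apply slit_of_im
      rw [im_one_sub_mul]
      simpa using mul_ne_zero hz h0
  have hderiv : ∀ t ∈ Set.uIcc (0:ℝ) 1,
      HasDerivAt (fun t : ℝ => Complex.log (1 - z * (t:ℂ)) / z) (-(1 - z * (t:ℂ))⁻¹) t := by
    intro t ht
    have hne' : (1 - z * (t:ℂ)) ≠ 0 := Complex.slitPlane_ne_zero (hne t ht)
    have h1 : HasDerivAt (fun t : ℝ => 1 - z * (t:ℂ)) (-z) t := by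
      simpa using ((Complex.ofRealCLM.hasDerivAt (x := t)).const_mul z).const_sub 1
    have h2 : HasDerivAt (fun t : ℝ => Complex.log (1 - z * (t:ℂ)))
        ((-z) • (1 - z * (t:ℂ))⁻¹) t := by
      have h := (Complex.hasDerivAt_log (hne t ht)).scomp t h1; exact h
    have h3 := h2.div_const z
    have he : (-z) • (1 - z * (t:ℂ))⁻¹ / z = -(1 - z * (t:ℂ))⁻¹ := by
      rw [smul_eq_mul]
      field_simp
    rwa [he] at h3
  have hcont : IntervalIntegrable (fun t : ℝ => -(1 - z * (t:ℂ))⁻¹) MeasureTheory.volume 0 1 := by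
    apply ContinuousOn.intervalIntegrable
    apply ContinuousOn.neg
    apply ContinuousOn.inv₀
    · fun_prop
    · intro t ht
      exact Complex.slitPlane_ne_zero (hne t ht)
  have := intervalIntegral.integral_eq_sub_of_hasDerivAt hderiv hcont
  rw [this]
  simp

lemma hasDerivAt_Li2 {z : ℂ} (hz : z.im ≠ 0) :
    HasDerivAt Li2 (-(Complex.log (1 - z)) / z) z := by
  have hz0 : z ≠ 0 := fun h => hz (by simp [h])
  set δ : ℝ := |z.im| / 2 with hδ
  have hδpos : 0 < δ := by positivity
  set m : ℝ := min (1/2) (δ / (2 * (‖z‖ + δ))) with hm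
  have hzn : (0:ℝ) < ‖z‖ + δ := by positivity
  have hmpos : 0 < m := by
    apply lt_min (by norm_num)
    positivity
  -- lower bound for ‖1 - x t‖ on the ball × (0,1]
  have key : ∀ x ∈ Metric.ball z δ, ∀ t ∈ Set.uIoc (0:ℝ) 1, m ≤ ‖1 - x * (t:ℂ)‖ := by
    intro x hx t ht
    rw [Set.uIoc_of_le (by norm_num : (0:ℝ) ≤ 1)] at ht
    have ht0 : 0 < t := ht.1
    have ht1 : t ≤ 1 := ht.2
    have hxz : ‖x - z‖ < δ := by simpa [dist_eq_norm] using hx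
    have hxim : δ ≤ |x.im| := by
      have h1 : |x.im - z.im| ≤ ‖x - z‖ := by
        simpa using Complex.abs_im_le_norm (x - z)
      have h2 : |z.im| - |x.im| ≤ |x.im - z.im| := by
        simpa [abs_sub_comm] using abs_sub_abs_le_abs_sub z.im x.im
      have : |z.im| = 2 * δ := by rw [hδ]; ring
      nlinarith
    have hxabs : ‖x‖ ≤ ‖z‖ + δ := by
      have := norm_sub_norm_le x z
      linarith
    rcases le_or_gt t (1 / (2 * (‖z‖ + δ))) with hsm | hlg
    · have habs : ‖x * (t:ℂ)‖ ≤ 1/2 := by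
        rw [norm_mul, Complex.norm_real, Real.norm_eq_abs, abs_of_pos ht0]
        calc ‖x‖ * t ≤ (‖z‖ + δ) * (1 / (2 * (‖z‖ + δ))) :=
              mul_le_mul hxabs hsm (le_of_lt ht0) (le_of_lt hzn)
          _ = 1/2 := by field_simp
      have h := norm_sub_norm_le (1:ℂ) (x * t)
      simp only [norm_one] at h
      calc m ≤ 1/2 := min_le_left _ _
        _ ≤ ‖1 - x*(t:ℂ)‖ := by linarith
    · have him : t * δ ≤ ‖1 - x * (t:ℂ)‖ := by
        have h1 : |(1 - x * (t:ℂ)).im| ≤ ‖1 - x * (t:ℂ)‖ := by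
          simpa using Complex.abs_im_le_norm (1 - x * (t:ℂ))
        rw [im_one_sub_mul, abs_neg, abs_mul, abs_of_pos ht0] at h1
        nlinarith
      have : δ / (2 * (‖z‖ + δ)) ≤ t * δ := by
        rw [div_le_iff₀ (by positivity)]
        have h1 : 1 < t * (2 * (‖z‖ + δ)) := (div_lt_iff₀ (by positivity)).mp hlg
        nlinarith
      calc m ≤ δ / (2 * (‖z‖ + δ)) := min_le_right _ _
        _ ≤ t * δ := this
        _ ≤ ‖1 - x * (t:ℂ)‖ := him
  -- slitPlane membership on the ball for t ∈ (0,1]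
  have hslit : ∀ x ∈ Metric.ball z δ, ∀ t ∈ Set.uIoc (0:ℝ) 1,
      (1 - x * (t:ℂ)) ∈ Complex.slitPlane := by
    intro x hx t ht
    rw [Set.uIoc_of_le (by norm_num : (0:ℝ) ≤ 1)] at ht
    have hxz : ‖x - z‖ < δ := by simpa [dist_eq_norm] using hx
    have hxim : x.im ≠ 0 := by
      intro h0
      have h1 : |x.im - z.im| ≤ ‖x - z‖ := by
        simpa using Complex.abs_im_le_norm (x - z)
      rw [h0] at h1
      have : |z.im| = 2 * δ := by rw [hδ]; ring
      rw [zero_sub, abs_neg] at h1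
      linarith
    apply slit_of_im
    rw [im_one_sub_mul]
    simpa using mul_ne_zero hxim (ne_of_gt ht.1)
  -- apply the parametric derivative theorem
  have main := intervalIntegral.hasDerivAt_integral_of_dominated_loc_of_deriv_le
    (F := fun x t => Complex.log (1 - x * (t:ℂ)) / (t:ℂ))
    (F' := fun x t => -(1 - x * (t:ℂ))⁻¹)
    (x₀ := z) (a := 0) (b := 1) (μ := MeasureTheory.volume)
    (bound := fun _ => m⁻¹) (Metric.ball_mem_nhds z hδpos)
    ?_ ?_ ?_ ?_ ?_ ?_
  · -- conclusion
    have hderiv := main.2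
    have : HasDerivAt (fun x => -∫ t in (0:ℝ)..(1:ℝ), Complex.log (1 - x * (t:ℂ)) / (t:ℂ))
        (-(∫ t in (0:ℝ)..(1:ℝ), -(1 - z * (t:ℂ))⁻¹)) z := hderiv.neg
    rw [integral_aux hz] at this
    have heq : -(Complex.log (1 - z) / z) = -(Complex.log (1 - z)) / z := (neg_div _ _).symm
    rw [heq] at this
    exact this
  · -- measurability of F x
    filter_upwards with x
    apply Measurable.aestronglyMeasurable
    exact ((Complex.measurable_log.comp
      (measurable_const.sub (Complex.measurable_ofReal.const_mul x))).div
      Complex.measurable_ofReal)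
  · -- integrability of F z
    rw [intervalIntegrable_iff]
    have hzm : z ∈ Metric.ball z δ := Metric.mem_ball_self hδpos
    set C : ℝ := 3/2 * ‖z‖ + 2 * ‖z‖ * (|Real.log m| + |Real.log (1 + ‖z‖)| + π) with hC
    apply MeasureTheory.Measure.integrableOn_of_bounded (M := C)
    · rw [Set.uIoc_of_le (by norm_num : (0:ℝ) ≤ 1)]
      exact (measure_Ioc_lt_top).ne
    · apply Measurable.aestronglyMeasurable
      exact ((Complex.measurable_log.comp
        (measurable_const.sub (Complex.measurable_ofReal.const_mul z))).div
        Complex.measurable_ofReal)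
    · rw [MeasureTheory.ae_restrict_iff' measurableSet_uIoc]
      filter_upwards with t ht
      have ht' := ht
      rw [Set.uIoc_of_le (by norm_num : (0:ℝ) ≤ 1)] at ht'
      have ht0 : 0 < t := ht'.1
      have ht1 : t ≤ 1 := ht'.2
      rw [norm_div, Complex.norm_real, Real.norm_eq_abs, abs_of_pos ht0]
      rcases le_or_gt (‖z‖ * t) (1/2) with hsm | hlg
      · have : ‖Complex.log (1 - z * (t:ℂ))‖ ≤ 3/2 * ‖z * (t:ℂ)‖ := by
          have := Complex.norm_log_one_add_half_le_self (z := -(z * (t:ℂ)))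
            (by rwa [norm_neg, norm_mul, Complex.norm_real, Real.norm_eq_abs, abs_of_pos ht0])
          simpa [sub_eq_add_neg] using this
        rw [norm_mul, Complex.norm_real, Real.norm_eq_abs, abs_of_pos ht0] at this
        have h2 : ‖Complex.log (1 - z * (t:ℂ))‖ / t ≤ 3/2 * ‖z‖ := by
          rw [div_le_iff₀ ht0]
          nlinarith
        have hCge : 3/2 * ‖z‖ ≤ C := by
          rw [hC]
          have : 0 ≤ 2 * ‖z‖ * (|Real.log m| + |Real.log (1 + ‖z‖)| + π) := by
            have := Real.pi_pos
            positivity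
          linarith
        linarith
      · -- t > 1/(2‖z‖)
        have hznz : (0:ℝ) < ‖z‖ := by
          rcases (norm_nonneg z).lt_or_eq with h | h
          · exact h
          · exfalso; nlinarith
        have hub : ‖1 - z * (t:ℂ)‖ ≤ 1 + ‖z‖ := by
          calc ‖1 - z * (t:ℂ)‖ ≤ ‖(1:ℂ)‖ + ‖z * (t:ℂ)‖ := norm_sub_le _ _
            _ ≤ 1 + ‖z‖ := by
                rw [norm_one, norm_mul, Complex.norm_real, Real.norm_eq_abs, abs_of_pos ht0]
                nlinarith
        have hlb : m ≤ ‖1 - z * (t:ℂ)‖ := key z hzm t ht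
        have hlog : ‖Complex.log (1 - z * (t:ℂ))‖
            ≤ |Real.log m| + |Real.log (1 + ‖z‖)| + π := by
          set w := 1 - z * (t:ℂ) with hw
          have habs : ‖w‖ ≤ |w.re| + |w.im| := by
            simpa using Complex.norm_le_abs_re_add_abs_im w
          have hre : (Complex.log w).re = Real.log ‖w‖ := Complex.log_re w
          have him2 : (Complex.log w).im = Complex.arg w := Complex.log_im w
          have h3 : ‖Complex.log w‖ ≤ |(Complex.log w).re| + |(Complex.log w).im| := by
            simpa using Complex.norm_le_abs_re_add_abs_im (Complex.log w)
          rw [hre, him2] at h3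
          have harg : |Complex.arg w| ≤ π := Complex.abs_arg_le_pi w
          have habsw : ‖w‖ = ‖w‖ := rfl
          have hlogw : |Real.log ‖w‖| ≤ |Real.log m| + |Real.log (1 + ‖z‖)| := by
            rw [habsw]
            rcases le_or_gt (‖w‖) 1 with h1 | h1
            · have : Real.log m ≤ Real.log ‖w‖ := Real.log_le_log hmpos hlb
              have h0 : Real.log ‖w‖ ≤ 0 := Real.log_nonpos (norm_nonneg w) h1
              have : |Real.log ‖w‖| ≤ |Real.log m| := by
                rw [abs_of_nonpos h0]
                calc -Real.log ‖w‖ ≤ -Real.log m := by linarith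
                  _ ≤ |Real.log m| := neg_le_abs _
              linarith [abs_nonneg (Real.log (1 + ‖z‖))]
            · have hw1 : (0:ℝ) < ‖w‖ := by linarith
              have : Real.log ‖w‖ ≤ Real.log (1 + ‖z‖) := Real.log_le_log hw1 hub
              have h0 : 0 ≤ Real.log ‖w‖ := Real.log_nonneg h1.le
              have : |Real.log ‖w‖| ≤ |Real.log (1 + ‖z‖)| := by
                rw [abs_of_nonneg h0]
                exact le_trans this (le_abs_self _)
              linarith [abs_nonneg (Real.log m)]
          linarith
        have h2t : 1 / t ≤ 2 * ‖z‖ := by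
          rw [div_le_iff₀ ht0]
          nlinarith
        rw [div_le_iff₀ ht0]
        have hCsplit : C = 3/2*‖z‖ + (2*‖z‖) * (|Real.log m| + |Real.log (1 + ‖z‖)| + π) := hC
        have hlogpos : 0 ≤ |Real.log m| + |Real.log (1 + ‖z‖)| + π := by
          have := Real.pi_pos
          positivity
        calc ‖Complex.log (1 - z * (t:ℂ))‖ ≤ |Real.log m| + |Real.log (1 + ‖z‖)| + π := hlog
          _ = (|Real.log m| + |Real.log (1 + ‖z‖)| + π) * (1) := by ring
          _ ≤ (|Real.log m| + |Real.log (1 + ‖z‖)| + π) * (2 * ‖z‖ * t) := by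
              apply mul_le_mul_of_nonneg_left _ hlogpos
              have := (div_le_iff₀ ht0).mp h2t
              nlinarith
          _ ≤ C * t := by rw [hCsplit]; nlinarith [norm_nonneg z, ht0.le]
  · -- measurability of F' z
    apply Measurable.aestronglyMeasurable
    exact ((measurable_const.sub (Complex.measurable_ofReal.const_mul z)).inv).neg
  · -- bound on F'
    filter_upwards with t ht x hx
    rw [norm_neg, norm_inv]
    exact inv_anti₀ hmpos (key x hx t ht)
  · exact intervalIntegrable_const
  · -- differentiability of F in x
    filter_upwards with t ht x hx
    have ht' := ht
    rw [Set.uIoc_of_le (by norm_num : (0:ℝ) ≤ 1)] at ht'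
    have ht0 : (0:ℝ) < t := ht'.1
    have htC : (t:ℂ) ≠ 0 := by
      simp only [ne_eq, Complex.ofReal_eq_zero]
      exact ne_of_gt ht0
    have h1 : HasDerivAt (fun x : ℂ => 1 - x * (t:ℂ)) (-(t:ℂ)) x := by
      simpa using ((hasDerivAt_id x).mul_const (t:ℂ)).const_sub 1
    have h2 : HasDerivAt (fun x : ℂ => Complex.log (1 - x * (t:ℂ)))
        ((1 - x * (t:ℂ))⁻¹ * (-(t:ℂ))) x := by
      have h := (Complex.hasDerivAt_log (hslit x hx t ht)).comp x h1; exact h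
    have h3 := h2.div_const (t:ℂ)
    have hnz : (1 - x * (t:ℂ)) ≠ 0 := Complex.slitPlane_ne_zero (hslit x hx t ht)
    have he : (1 - x * (t:ℂ))⁻¹ * (-(t:ℂ)) / (t:ℂ) = -(1 - x * (t:ℂ))⁻¹ := by
      field_simp
    rwa [he] at h3


lemma hasDerivAt_Li2_exp {u : ℂ} (h : (Complex.exp u).im ≠ 0) :
    HasDerivAt (fun v => Li2 (-Complex.exp v)) (-(Complex.log (1 + Complex.exp u))) u := by
  have hζ : (-Complex.exp u).im ≠ 0 := by simpa using h
  have h1 : HasDerivAt (fun v : ℂ => -Complex.exp v) (-Complex.exp u) u :=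
    (Complex.hasDerivAt_exp u).neg
  have h2 := (hasDerivAt_Li2 hζ).comp u h1
  have hne : Complex.exp u ≠ 0 := Complex.exp_ne_zero u
  have he : -(Complex.log (1 - -Complex.exp u)) / (-Complex.exp u) * -Complex.exp u
      = -(Complex.log (1 + Complex.exp u)) := by
    rw [sub_neg_eq_add]
    field_simp
  rw [he] at h2
  exact h2

/-- First derivative of the potential, evaluated on basis vectors. -/
lemma hasFDerivAt_potential (nP nN : ℕ) (Q : Matrix (Fin (nP+nN)) (Fin (nP+nN)) ℝ)
    (w : Fin (nP+nN) → ℂ) (y' : Fin (nP+nN) → ℂ)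
    (hU : ∀ k, (Complex.exp (y' k)).im ≠ 0) :
    ∃ D : (Fin (nP+nN) → ℂ) →L[ℂ] ℂ, HasFDerivAt (potential nP nN Q w) D y' ∧
      ∀ k, D (Pi.single k 1) =
        Complex.I * ((∑ j, (Q.map Complex.ofReal) j k * y' j)
            + ∑ j, (Q.map Complex.ofReal) k j * y' j)
          + -(epsR nP (nP+nN) k : ℂ) * w k
          + Complex.I * (epsR nP (nP+nN) k : ℂ)
              * (-(Complex.log (1 + Complex.exp (y' k)))) := by
  classical
  set Qc := Q.map Complex.ofReal with hQc
  have hpot : potential nP nN Q w = fun u : Fin (nP+nN) → ℂ =>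
      Complex.I * (∑ j, ∑ l, Qc j l * (u j * u l))
        + ∑ k, (-(epsR nP (nP+nN) k : ℂ) * w k) * u k
        + Complex.I * ∑ k ∈ Finset.univ.filter (fun k : Fin (nP+nN) => (k : ℕ) < nP),
            Li2 (-Complex.exp (u k))
        - Complex.I * ∑ k ∈ Finset.univ.filter (fun k : Fin (nP+nN) => ¬ (k : ℕ) < nP),
            Li2 (-Complex.exp (u k)) := by
    funext u
    have e1 : u ⬝ᵥ Qc.mulVec u = ∑ j, ∑ l, Qc j l * (u j * u l) := by
      simp only [dotProduct, Matrix.mulVec, Finset.mul_sum]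
      exact Finset.sum_congr rfl fun j _ => Finset.sum_congr rfl fun l _ => by ring
    have e2 : (∑ k, -(epsR nP (nP+nN) k : ℂ) * u k * w k)
        = ∑ k, (-(epsR nP (nP+nN) k : ℂ) * w k) * u k :=
      Finset.sum_congr rfl fun k _ => by ring
    rw [potential, e1, e2]
  have h1 : HasFDerivAt (fun u : Fin (nP+nN) → ℂ => ∑ j, ∑ l, Qc j l * (u j * u l))
      (∑ j, ∑ l, Qc j l • ((y' j) • (ContinuousLinearMap.proj l)
        + (y' l) • (ContinuousLinearMap.proj j : (Fin (nP+nN) → ℂ) →L[ℂ] ℂ))) y' := by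
    apply HasFDerivAt.fun_sum
    intro j _
    apply HasFDerivAt.fun_sum
    intro l _
    exact (((ContinuousLinearMap.proj j : (Fin (nP+nN) → ℂ) →L[ℂ] ℂ).hasFDerivAt.mul
      (ContinuousLinearMap.proj l : (Fin (nP+nN) → ℂ) →L[ℂ] ℂ).hasFDerivAt).const_mul (Qc j l))
  have h2 : HasFDerivAt (fun u : Fin (nP+nN) → ℂ =>
      ∑ k, (-(epsR nP (nP+nN) k : ℂ) * w k) * u k)
      (∑ k, (-(epsR nP (nP+nN) k : ℂ) * w k) •
        (ContinuousLinearMap.proj k : (Fin (nP+nN) → ℂ) →L[ℂ] ℂ)) y' := by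
    apply HasFDerivAt.fun_sum
    intro k _
    exact ((ContinuousLinearMap.proj k : (Fin (nP+nN) → ℂ) →L[ℂ] ℂ).hasFDerivAt.const_mul _)
  have h3 : ∀ s : Finset (Fin (nP+nN)), HasFDerivAt (fun u : Fin (nP+nN) → ℂ =>
      ∑ k ∈ s, Li2 (-Complex.exp (u k)))
      (∑ k ∈ s, (-(Complex.log (1 + Complex.exp (y' k)))) •
        (ContinuousLinearMap.proj k : (Fin (nP+nN) → ℂ) →L[ℂ] ℂ)) y' := by
    intro s
    apply HasFDerivAt.fun_sum
    intro k _
    exact HasDerivAt.comp_hasFDerivAt (h₂ := fun v => Li2 (-Complex.exp v)) y'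
      (hasDerivAt_Li2_exp (hU k))
      (ContinuousLinearMap.proj k : (Fin (nP+nN) → ℂ) →L[ℂ] ℂ).hasFDerivAt
  have hD := (((h1.const_mul Complex.I).fun_add h2).fun_add ((h3 (Finset.univ.filter (fun k : Fin (nP+nN) => (k:ℕ) < nP))).const_mul Complex.I)).fun_sub
      ((h3 (Finset.univ.filter (fun k : Fin (nP+nN) => ¬ (k:ℕ) < nP))).const_mul Complex.I)
  rw [← hpot] at hD
  refine ⟨_, hD, ?_⟩
  intro k
  rw [ContinuousLinearMap.sub_apply, ContinuousLinearMap.add_apply,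
    ContinuousLinearMap.add_apply, ContinuousLinearMap.smul_apply,
    ContinuousLinearMap.smul_apply, ContinuousLinearMap.smul_apply,
    ContinuousLinearMap.sum_apply, ContinuousLinearMap.sum_apply,
    ContinuousLinearMap.sum_apply, ContinuousLinearMap.sum_apply]
  simp only [ContinuousLinearMap.sum_apply, ContinuousLinearMap.smul_apply,
    ContinuousLinearMap.add_apply, ContinuousLinearMap.proj_apply, Pi.single_apply,
    smul_eq_mul]
  have hsum : ∀ j l : Fin (nP+nN), Qc j l * (y' j * (if l = k then (1:ℂ) else 0)
      + y' l * (if j = k then (1:ℂ) else 0))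
      = (if l = k then Qc j l * y' j else 0) + (if j = k then Qc j l * y' l else 0) := by
    intro j l
    by_cases h1 : l = k <;> by_cases h2 : j = k <;> simp [h1, h2] <;> ring
  have S1 : (∑ j, ∑ l, Qc j l * (y' j * (if l = k then (1:ℂ) else 0)
      + y' l * (if j = k then (1:ℂ) else 0)))
      = (∑ j, Qc j k * y' j) + ∑ j, Qc k j * y' j := by
    simp only [hsum, Finset.sum_add_distrib]
    congr 1
    · exact Finset.sum_congr rfl fun j _ => by
        rw [Finset.sum_ite_eq' Finset.univ k]
        simp
    · rw [Finset.sum_comm]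
      exact Finset.sum_congr rfl fun l _ => by
        rw [Finset.sum_ite_eq' Finset.univ k]
        simp
  have S2 : (∑ x, -(epsR nP (nP+nN) x : ℂ) * w x * (if x = k then (1:ℂ) else 0))
      = -(epsR nP (nP+nN) k : ℂ) * w k := by
    simp only [mul_ite, mul_one, mul_zero]
    rw [Finset.sum_ite_eq' Finset.univ k]
    simp
  have S3 : ∀ s : Finset (Fin (nP+nN)),
      (∑ x ∈ s, -Complex.log (1 + Complex.exp (y' x)) * (if x = k then (1:ℂ) else 0))
      = if k ∈ s then -Complex.log (1 + Complex.exp (y' k)) else 0 := by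
    intro s
    simp only [mul_ite, mul_one, mul_zero]
    rw [Finset.sum_ite_eq' s k]
  rw [S1, S2, S3, S3]
  by_cases hk : (k : ℕ) < nP
  · simp only [epsR, hk, if_true, Finset.mem_filter, Finset.mem_univ, true_and, not_true,
      if_false, Complex.ofReal_one]
    ring
  · have hk' : nP ≤ (k:ℕ) := Nat.not_lt.mp hk
    simp only [epsR, hk, if_false, Finset.mem_filter, Finset.mem_univ, true_and, not_false_iff,
      if_true, Complex.ofReal_neg, Complex.ofReal_one]
    ring

/-- Second derivative: derivative of the gradient component. -/
lemma hasFDerivAt_grad {n : ℕ} (Qc : Matrix (Fin n) (Fin n) ℂ) (c0 c1 : ℂ)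
    (k : Fin n) (y : Fin n → ℂ) (hk : (Complex.exp (y k)).im ≠ 0) :
    ∃ E : (Fin n → ℂ) →L[ℂ] ℂ,
      HasFDerivAt (fun u : Fin n → ℂ =>
        Complex.I * ((∑ j, Qc j k * u j) + ∑ j, Qc k j * u j)
          + c0 + c1 * (-(Complex.log (1 + Complex.exp (u k))))) E y ∧
      ∀ j, E (Pi.single j 1) = Complex.I * (Qc j k + Qc k j)
          - c1 * (if j = k then Complex.exp (y k) * (1 + Complex.exp (y k))⁻¹ else 0) := by
  classical
  have hslit : (1 + Complex.exp (y k)) ∈ Complex.slitPlane :=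
    slit_of_im (by simpa using hk)
  have hlin : ∀ M : Matrix (Fin n) (Fin n) ℂ, ∀ f : Fin n → Fin n → ℂ,
      HasFDerivAt (fun u : Fin n → ℂ => ∑ j, f j k * u j)
      (∑ j, (f j k) • (ContinuousLinearMap.proj j : (Fin n → ℂ) →L[ℂ] ℂ)) y := by
    intro M f
    apply HasFDerivAt.fun_sum
    intro j _
    exact ((ContinuousLinearMap.proj j : (Fin n → ℂ) →L[ℂ] ℂ).hasFDerivAt.const_mul _)
  have hlog : HasDerivAt (fun c : ℂ => -(Complex.log (1 + Complex.exp c)))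
      (-((1 + Complex.exp (y k))⁻¹ * Complex.exp (y k))) (y k) := by
    have h1 : HasDerivAt (fun c : ℂ => 1 + Complex.exp c) (Complex.exp (y k)) (y k) :=
      (Complex.hasDerivAt_exp (y k)).const_add 1
    exact ((Complex.hasDerivAt_log hslit).comp (y k) h1).neg
  have hcomp : HasFDerivAt (fun u : Fin n → ℂ => -(Complex.log (1 + Complex.exp (u k))))
      ((-((1 + Complex.exp (y k))⁻¹ * Complex.exp (y k))) •
        (ContinuousLinearMap.proj k : (Fin n → ℂ) →L[ℂ] ℂ)) y :=
    HasDerivAt.comp_hasFDerivAt (h₂ := fun c : ℂ => -(Complex.log (1 + Complex.exp c))) y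
      hlog (ContinuousLinearMap.proj k : (Fin n → ℂ) →L[ℂ] ℂ).hasFDerivAt
  have hD := ((((hlin Qc Qc).fun_add (hlin Qc (fun j l => Qc l j))).const_mul
      Complex.I).add_const c0).fun_add (hcomp.const_mul c1)
  refine ⟨_, hD, ?_⟩
  intro j
  simp only [ContinuousLinearMap.add_apply, ContinuousLinearMap.smul_apply,
    ContinuousLinearMap.sum_apply, ContinuousLinearMap.proj_apply, Pi.single_apply,
    smul_eq_mul]
  have S : ∀ f : Fin n → Fin n → ℂ,
      (∑ x, f x k * (if x = j then (1:ℂ) else 0)) = f j k := by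
    intro f
    simp only [mul_ite, mul_one, mul_zero]
    rw [Finset.sum_ite_eq' Finset.univ j]
    simp
  rw [S Qc, S (fun j l => Qc l j)]
  by_cases hj : j = k
  · subst hj
    simp
    ring
  · have : ¬ (k = j) := fun h => hj h.symm
    simp [this, hj]


/-- Proposition 3.4 (Hesstotor): the holomorphic Hessian of the potential
function at `y(z)` is `2iQ - i diag(ε_k/(1+e^{-y_k}))`, and its determinant
equals `iⁿ det(B)⁻¹ det(A Δ_{z''} + B Δ_z⁻¹) ∏ z_k/(1-z_k)`. -/
theorem stmt_6 (nP nN : ℕ) (hn : 1 ≤ nP + nN)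
    (Q A B : Matrix (Fin (nP + nN)) (Fin (nP + nN)) ℝ) (hQ : Q.IsSymm)
    (hB : IsUnit B.det)
    (hBA : B⁻¹ * A
      = (-2 : ℝ) • (Matrix.diagonal (epsR nP (nP + nN)) * Q *
          Matrix.diagonal (epsR nP (nP + nN)))
        + Matrix.diagonal (fun k => max (epsR nP (nP + nN) k) 0))
    (w : Fin (nP + nN) → ℂ)
    (z : Fin (nP + nN) → ℂ) (hz : ∀ k, 0 < (z k).im)
    (y : Fin (nP + nN) → ℂ)
    (hy : ∀ k, y k = (epsR nP (nP + nN) k : ℂ) * (Complex.log (z k) - Complex.I * (π : ℂ))) :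
    (Matrix.of fun j k : Fin (nP + nN) =>
        fderiv ℂ (fun y' => fderiv ℂ (potential nP nN Q w) y' (Pi.single k 1)) y
          (Pi.single j 1))
      = (2 * Complex.I) • (Q.map Complex.ofReal)
        - Complex.I • Matrix.diagonal
            (fun k => (epsR nP (nP + nN) k : ℂ) / (1 + Complex.exp (-(y k)))) ∧
    (Matrix.of fun j k : Fin (nP + nN) =>
        fderiv ℂ (fun y' => fderiv ℂ (potential nP nN Q w) y' (Pi.single k 1)) y
          (Pi.single j 1)).det
      = Complex.I ^ (nP + nN) * ((B.det : ℂ))⁻¹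
        * ((A.map Complex.ofReal) * Matrix.diagonal (fun k => (z k - 1) / z k)
            + (B.map Complex.ofReal) * (Matrix.diagonal z)⁻¹).det
        * ∏ k, z k / (1 - z k) := by
  classical
  set Qc := Q.map Complex.ofReal with hQc
  set eps : Fin (nP+nN) → ℂ := fun k => ((epsR nP (nP+nN) k : ℝ) : ℂ) with heps
  -- basic nonvanishing facts
  have hz0 : ∀ k, z k ≠ 0 := fun k h => by simpa [h] using (hz k).ne'
  have hz1 : ∀ k, z k ≠ 1 := fun k h => by simpa [h] using (hz k).ne'
  have hz1' : ∀ k, z k - 1 ≠ 0 := fun k h => hz1 k (by linear_combination h)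
  have hz1'' : ∀ k, 1 - z k ≠ 0 := fun k h => hz1 k (by linear_combination -h)
  -- exponentials
  have hexp : ∀ k, Complex.exp (y k) = if (k : ℕ) < nP then -(z k) else -(z k)⁻¹ := by
    intro k
    rw [hy k]
    have hpi : Complex.exp (Complex.I * (π:ℂ)) = -1 := by
      rw [mul_comm]; exact Complex.exp_pi_mul_I
    by_cases hk : (k : ℕ) < nP
    · simp only [epsR, hk, if_true, Complex.ofReal_one, one_mul]
      rw [Complex.exp_sub, Complex.exp_log (hz0 k), hpi]
      ring
    · simp only [epsR, hk, if_false, Complex.ofReal_neg, Complex.ofReal_one, neg_mul, one_mul]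
      rw [neg_sub, Complex.exp_sub, hpi, Complex.exp_log (hz0 k)]
      ring
  have hexpim : ∀ k, (Complex.exp (y k)).im ≠ 0 := by
    intro k
    rw [hexp k]
    by_cases hk : (k : ℕ) < nP
    · simp only [hk, if_true, Complex.neg_im, neg_ne_zero]
      exact (hz k).ne'
    · simp only [hk, if_false, Complex.neg_im, neg_ne_zero, Complex.inv_im]
      have hnsq : Complex.normSq (z k) ≠ 0 := fun h => hz0 k (Complex.normSq_eq_zero.mp h)
      intro h
      rw [neg_div] at h
      have := neg_eq_zero.mp h
      have := div_eq_zero_iff.mp this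
      rcases this with h' | h'
      · exact (hz k).ne' h'
      · exact hz0 k (Complex.normSq_eq_zero.mp h')
  have h1e : ∀ k, 1 + Complex.exp (y k) ≠ 0 := by
    intro k h
    have : (1 + Complex.exp (y k)).im = (Complex.exp (y k)).im := by simp
    rw [h] at this
    exact hexpim k (by simpa using this.symm)
  have hexp0 : ∀ k, Complex.exp (y k) ≠ 0 := fun k => Complex.exp_ne_zero _
  have hexpnegim : ∀ k, (Complex.exp (-(y k))).im ≠ 0 := by
    intro k
    rw [Complex.exp_neg]
    rw [Complex.inv_im]
    have hnsq : Complex.normSq (Complex.exp (y k)) ≠ 0 :=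
      fun h => hexp0 k (Complex.normSq_eq_zero.mp h)
    intro h
    rw [neg_div] at h
    rcases div_eq_zero_iff.mp (neg_eq_zero.mp h) with h' | h'
    · exact hexpim k h'
    · exact hnsq h'
  have h1e' : ∀ k, 1 + Complex.exp (-(y k)) ≠ 0 := by
    intro k h
    have h2 : (1 + Complex.exp (-(y k))).im = (Complex.exp (-(y k))).im := by simp
    rw [h] at h2
    exact hexpnegim k (by simpa using h2.symm)
  -- the diagonal entries
  set d : Fin (nP+nN) → ℂ := fun k => (epsR nP (nP+nN) k : ℂ) / (1 + Complex.exp (-(y k))) with hdd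
  have hdiv : ∀ k, d k = eps k * (Complex.exp (y k) * (1 + Complex.exp (y k))⁻¹) := by
    intro k
    have hone : Complex.exp (y k) * (1 + Complex.exp (y k))⁻¹ * (1 + (Complex.exp (y k))⁻¹)
        = 1 := by
      have e1 : Complex.exp (y k) * (1 + Complex.exp (y k))⁻¹ * (1 + (Complex.exp (y k))⁻¹)
          = (1 + Complex.exp (y k))⁻¹ * (Complex.exp (y k) * (1 + (Complex.exp (y k))⁻¹)) := by
        ring
      rw [e1, mul_add, mul_one, mul_inv_cancel₀ (hexp0 k), add_comm (Complex.exp (y k)) 1,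
        inv_mul_cancel₀ (h1e k)]
    rw [hdd]
    simp only
    rw [Complex.exp_neg, div_eq_iff (by rw [← Complex.exp_neg]; exact h1e' k)]
    have hfin : eps k * (Complex.exp (y k) * (1 + Complex.exp (y k))⁻¹)
        * (1 + (Complex.exp (y k))⁻¹) = eps k := by
      calc eps k * (Complex.exp (y k) * (1 + Complex.exp (y k))⁻¹)
          * (1 + (Complex.exp (y k))⁻¹)
          = eps k * (Complex.exp (y k) * (1 + Complex.exp (y k))⁻¹
              * (1 + (Complex.exp (y k))⁻¹)) := by ring
        _ = eps k := by rw [hone, mul_one]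
    exact hfin.symm
  have hexpneg : ∀ k, Complex.exp (-(y k)) = if (k : ℕ) < nP then -(z k)⁻¹ else -(z k) := by
    intro k
    rw [Complex.exp_neg, hexp k]
    by_cases hk : (k : ℕ) < nP
    · simp only [hk, if_true]
      rw [inv_neg]
    · simp only [hk, if_false]
      rw [inv_neg, inv_inv]
  have hd : ∀ k, d k = if (k : ℕ) < nP then z k / (z k - 1) else 1 / (z k - 1) := by
    intro k
    rw [hdd]
    simp only
    rw [hexpneg k]
    by_cases hk : (k : ℕ) < nP
    · have her : epsR nP (nP+nN) k = 1 := by simp [epsR, hk]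
      simp only [hk, if_true, her, Complex.ofReal_one]
      have hne1 : (1:ℂ) + -(z k)⁻¹ ≠ 0 := by
        intro h
        apply hz1' k
        have h' := congrArg (· * z k) h
        simp only [add_mul, one_mul, neg_mul, zero_mul] at h'
        rw [inv_mul_cancel₀ (hz0 k)] at h'
        linear_combination h'
      rw [div_eq_div_iff hne1 (hz1' k)]
      rw [mul_add, mul_one, mul_neg, mul_inv_cancel₀ (hz0 k)]
      ring
    · have her : epsR nP (nP+nN) k = -1 := by simp [epsR, hk]
      simp only [hk, if_false, her, Complex.ofReal_neg, Complex.ofReal_one]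
      have hne2 : (1:ℂ) + -(z k) ≠ 0 := by
        rw [← sub_eq_add_neg]; exact hz1'' k
      rw [div_eq_div_iff hne2 (hz1' k)]
      ring
  -- neighborhood of y where everything is differentiable
  set U : Set (Fin (nP+nN) → ℂ) := {u | ∀ k, (Complex.exp (u k)).im ≠ 0} with hUdef
  have hUopen : IsOpen U := by
    have : U = ⋂ k, (fun u : Fin (nP+nN) → ℂ => (Complex.exp (u k)).im) ⁻¹' {(0:ℝ)}ᶜ := by
      ext u; simp [hUdef]
    rw [this]
    apply isOpen_iInter_of_finite
    intro k
    apply IsOpen.preimage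
    · exact Complex.continuous_im.comp (Complex.continuous_exp.comp (continuous_apply k))
    · exact isOpen_compl_singleton
  have hyU : y ∈ U := fun k => hexpim k
  have hUnhds : U ∈ nhds y := hUopen.mem_nhds hyU
  -- Hessian entries
  have hHess : (Matrix.of fun j k : Fin (nP+nN) =>
      fderiv ℂ (fun y' => fderiv ℂ (potential nP nN Q w) y' (Pi.single k 1)) y
        (Pi.single j 1))
      = (2 * Complex.I) • Qc - Complex.I • Matrix.diagonal d := by
    ext j k
    have hev : (fun u => fderiv ℂ (potential nP nN Q w) u (Pi.single k 1)) =ᶠ[nhds y]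
        (fun u => Complex.I * ((∑ j, Qc j k * u j) + ∑ j, Qc k j * u j)
          + -(epsR nP (nP+nN) k : ℂ) * w k
          + (Complex.I * (epsR nP (nP+nN) k : ℂ)) * (-(Complex.log (1 + Complex.exp (u k))))) := by
      filter_upwards [hUnhds] with u hu
      obtain ⟨D, hD, hval⟩ := hasFDerivAt_potential nP nN Q w u hu
      rw [hD.fderiv, hval k]
    rw [Matrix.of_apply, hev.fderiv_eq]
    obtain ⟨E, hE, hEval⟩ := hasFDerivAt_grad Qc (-(epsR nP (nP+nN) k : ℂ) * w k)
      (Complex.I * (epsR nP (nP+nN) k : ℂ)) k y (hexpim k)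
    rw [hE.fderiv, hEval j]
    have hsym : Qc k j = Qc j k := by
      rw [hQc]
      simp only [Matrix.map_apply]
      rw [hQ.apply]
    rw [hsym]
    simp only [Matrix.sub_apply, Matrix.smul_apply, Matrix.diagonal_apply, smul_eq_mul]
    by_cases hj : j = k
    · subst hj
      simp only [if_true]
      rw [hdiv j]
      ring
    · have hj' : ¬ (j = k) := hj
      simp only [hj', if_false, mul_zero, sub_zero]
      ring
  refine ⟨hHess, ?_⟩
  rw [hHess]
  -- determinant identity
  set N : Matrix (Fin (nP+nN)) (Fin (nP+nN)) ℂ := (2:ℂ) • Qc - Matrix.diagonal d with hN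
  have hfact : (2 * Complex.I) • Qc - Complex.I • Matrix.diagonal d = Complex.I • N := by
    rw [hN, smul_sub, smul_smul]
    ring_nf
  have hdetL : ((2 * Complex.I) • Qc - Complex.I • Matrix.diagonal d).det
      = Complex.I ^ (nP+nN) * N.det := by
    rw [hfact, Matrix.det_smul]
    simp
  -- inverse of diagonal z
  have hdinv : (Matrix.diagonal z)⁻¹ = Matrix.diagonal (fun k => (z k)⁻¹) := by
    apply Matrix.inv_eq_right_inv
    rw [Matrix.diagonal_mul_diagonal]
    have : (fun k => z k * (z k)⁻¹) = fun _ => (1:ℂ) :=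
      funext fun k => mul_inv_cancel₀ (hz0 k)
    rw [this, Matrix.diagonal_one]
  -- A in terms of B
  have hAc : A.map Complex.ofReal
      = (B.map Complex.ofReal) * ((B⁻¹ * A).map Complex.ofReal) := by
    have h1 : B * (B⁻¹ * A) = A := by
      rw [← Matrix.mul_assoc, Matrix.mul_nonsing_inv B hB, Matrix.one_mul]
    conv_lhs => rw [← h1]
    exact Matrix.map_mul (f := Complex.ofRealHom)
  -- key matrix identity
  have keyM : ((B⁻¹ * A).map Complex.ofReal) * Matrix.diagonal (fun k => (z k - 1) / z k)
      + Matrix.diagonal (fun k => (z k)⁻¹)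
      = Matrix.diagonal eps * N * Matrix.diagonal eps
        * Matrix.diagonal (fun k => (1 - z k) / z k) := by
    rw [hBA]
    ext i j
    simp only [hN, hQc, heps, Matrix.add_apply, Matrix.mul_diagonal, Matrix.diagonal_mul,
      Matrix.map_apply, Matrix.smul_apply, Matrix.diagonal_apply, Matrix.sub_apply,
      smul_eq_mul]
    by_cases hij : i = j
    · subst hij
      simp only [if_true, ite_true, if_pos rfl]
      rw [hd i]
      by_cases hk : (i : ℕ) < nP
      · have her : epsR nP (nP+nN) i = 1 := by simp [epsR, hk]
        simp only [hk, if_true, her]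
        rw [max_eq_left (by norm_num : (0:ℝ) ≤ 1)]
        push_cast
        field_simp [hz0 i, hz1' i]
        ring
      · have her : epsR nP (nP+nN) i = -1 := by simp [epsR, hk]
        simp only [hk, if_false, her]
        rw [max_eq_right (by norm_num : (-1:ℝ) ≤ 0)]
        push_cast
        field_simp [hz0 i, hz1' i]
        ring
    · simp only [hij, if_false, add_zero, mul_zero, sub_zero]
      push_cast
      ring
  -- determinant bookkeeping
  have hdetB : ((B.det : ℝ) : ℂ) ≠ 0 :=
    Complex.ofReal_ne_zero.mpr hB.ne_zero
  have hepssq : (∏ k, eps k) * (∏ k, eps k) = 1 := by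
    rw [← Finset.prod_mul_distrib]
    apply Finset.prod_eq_one
    intro k _
    by_cases hk : (k : ℕ) < nP <;> simp [heps, epsR, hk]
  have hprodcancel : (∏ k, (1 - z k) / z k) * (∏ k, z k / (1 - z k)) = 1 := by
    rw [← Finset.prod_mul_distrib]
    apply Finset.prod_eq_one
    intro k _
    rw [div_mul_div_comm, div_eq_one_iff_eq (mul_ne_zero (hz0 k) (hz1'' k))]
    ring
  have hdetBc : (B.map Complex.ofReal).det = ((B.det : ℝ) : ℂ) :=
    (RingHom.map_det Complex.ofRealHom B).symm
  have hdetR : ((A.map Complex.ofReal) * Matrix.diagonal (fun k => (z k - 1) / z k)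
      + (B.map Complex.ofReal) * (Matrix.diagonal z)⁻¹).det
      = ((B.det : ℝ) : ℂ) * (N.det * ∏ k, (1 - z k) / z k) := by
    rw [hdinv, hAc, Matrix.mul_assoc, ← Matrix.mul_add, keyM]
    rw [Matrix.det_mul, Matrix.det_mul, Matrix.det_mul, Matrix.det_mul]
    rw [hdetBc, Matrix.det_diagonal, Matrix.det_diagonal]
    calc ((B.det : ℝ) : ℂ) * ((∏ k, eps k) * N.det * (∏ k, eps k)
          * ∏ k, (1 - z k) / z k)
        = ((B.det : ℝ) : ℂ) * (((∏ k, eps k) * (∏ k, eps k))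
            * (N.det * ∏ k, (1 - z k) / z k)) := by ring
      _ = ((B.det : ℝ) : ℂ) * (N.det * ∏ k, (1 - z k) / z k) := by
          rw [hepssq, one_mul]
  rw [hdetL, hdetR]
  calc Complex.I ^ (nP+nN) * N.det
      = Complex.I ^ (nP+nN) * N.det * (((B.det : ℝ) : ℂ)⁻¹ * ((B.det : ℝ) : ℂ))
        * ((∏ k, (1 - z k) / z k) * ∏ k, z k / (1 - z k)) := by
        rw [inv_mul_cancel₀ hdetB, hprodcancel, mul_one, mul_one]
    _ = Complex.I ^ (nP+nN) * ((B.det : ℝ) : ℂ)⁻¹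
        * (((B.det : ℝ) : ℂ) * (N.det * ∏ k, (1 - z k) / z k))
        * ∏ k, z k / (1 - z k) := by ring
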